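/- Let ξ : ℂ × ℂ → ℂ be an entire holomorphic function and suppose there are constants λ₁, λ₂, μ₁, μ₂ ∈ ℂ with (λ₁, λ₂) ≠ (0,0) such that for all (z,w) ∈ ℂ × ℂ: ∂ξ/∂z (z,w) = λ₁·ξ(z,w) + μ₁ and ∂ξ/∂w (z,w) = λ₂·ξ(z,w) + μ₂. Then λ₁·μ₂ = λ₂·μ₁, and there exist constants γ, c ∈ ℂ such that ξ(z,w) = γ·exp(λ₁·z + λ₂·w) + c for all (z,w). -/

import Mathlib

open Complex

/-- If `ξ : ℂ × ℂ → ℂ` is entire and satisfies `ξ_z = λ₁ξ + μ₁`, `ξ_w = λ₂ξ + μ₂`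
with `(λ₁,λ₂) ≠ (0,0)`, then `λ₁μ₂ = λ₂μ₁` and `ξ(z,w) = γ·e^{λ₁z+λ₂w} + c` for
some constants `γ, c ∈ ℂ`. -/
theorem exponential_form_of_affinely_self_derivative
    (ξ : ℂ × ℂ → ℂ) (hξ : Differentiable ℂ ξ)
    (lam₁ lam₂ mu₁ mu₂ : ℂ) (hlam : (lam₁, lam₂) ≠ (0, 0))
    (h₁ : ∀ p : ℂ × ℂ, fderiv ℂ ξ p (1, 0) = lam₁ * ξ p + mu₁)
    (h₂ : ∀ p : ℂ × ℂ, fderiv ℂ ξ p (0, 1) = lam₂ * ξ p + mu₂) :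
    lam₁ * mu₂ = lam₂ * mu₁ ∧
    ∃ γ c : ℂ, ∀ p : ℂ × ℂ,
      ξ p = γ * Complex.exp (lam₁ * p.1 + lam₂ * p.2) + c := by
  -- The linear map `L (z,w) = lam₁ z + lam₂ w`.
  set L : (ℂ × ℂ) →L[ℂ] ℂ :=
    lam₁ • ContinuousLinearMap.fst ℂ ℂ ℂ + lam₂ • ContinuousLinearMap.snd ℂ ℂ ℂ with hL
  have hLapp : ∀ v : ℂ × ℂ, L v = lam₁ * v.1 + lam₂ * v.2 := by
    intro v; simp [hL]
  -- The constant linear map `M (z,w) = mu₁ z + mu₂ w`.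
  set M : (ℂ × ℂ) →L[ℂ] ℂ :=
    mu₁ • ContinuousLinearMap.fst ℂ ℂ ℂ + mu₂ • ContinuousLinearMap.snd ℂ ℂ ℂ with hM
  have hMapp : ∀ v : ℂ × ℂ, M v = mu₁ * v.1 + mu₂ * v.2 := by
    intro v; simp [hM]
  -- The full derivative of ξ at p is `ξ p • L + M`.
  have hD : ∀ p : ℂ × ℂ, fderiv ℂ ξ p = ξ p • L + M := by
    intro p
    refine ContinuousLinearMap.ext fun v => ?_
    have hv : v = v.1 • ((1:ℂ), (0:ℂ)) + v.2 • ((0:ℂ), (1:ℂ)) := by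
      simp [Prod.ext_iff]
    conv_lhs => rw [hv]
    rw [map_add, map_smul, map_smul, h₁ p, h₂ p]
    simp only [ContinuousLinearMap.add_apply, ContinuousLinearMap.smul_apply,
      smul_eq_mul, hLapp, hMapp]
    ring
  have hF : ∀ p : ℂ × ℂ, HasFDerivAt ξ (ξ p • L + M) p := by
    intro p; rw [← hD p]; exact (hξ p).hasFDerivAt
  -- The map `p ↦ ξ p • L + M` has derivative `(ξ p • L + M).smulRight L` at p.
  have hF2 : ∀ p : ℂ × ℂ,
      HasFDerivAt (fun q => ξ q • L + M) ((ξ p • L + M).smulRight L) p := by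
    intro p
    exact ((hF p).smul_const L).add_const M
  -- Symmetry of second derivatives yields λ₁μ₂ = λ₂μ₁.
  have hsymm : lam₁ * mu₂ = lam₂ * mu₁ := by
    have := second_derivative_symmetric hF (hF2 0) (1, 0) (0, 1)
    simp only [ContinuousLinearMap.smulRight_apply, ContinuousLinearMap.add_apply,
      ContinuousLinearMap.smul_apply, smul_eq_mul] at this
    rw [hLapp, hLapp, hMapp, hMapp] at this
    linear_combination -this
  refine ⟨hsymm, ?_⟩
  -- Choose the constant c with mu₁ = -c·lam₁ and mu₂ = -c·lam₂.
  obtain ⟨c, hc₁, hc₂⟩ : ∃ c : ℂ, mu₁ = -c * lam₁ ∧ mu₂ = -c * lam₂ := by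
    rcases eq_or_ne lam₁ 0 with hl1 | hl1
    · have hl2 : lam₂ ≠ 0 := by
        intro hl2; exact hlam (by simp [hl1, hl2])
      refine ⟨-mu₂ / lam₂, ?_, ?_⟩
      · subst hl1
        have : lam₂ * mu₁ = 0 := by linear_combination -hsymm
        have := (mul_eq_zero.1 this).resolve_left hl2
        simp [this]
      · field_simp
    · refine ⟨-mu₁ / lam₁, ?_, ?_⟩
      · field_simp
      · field_simp
        linear_combination hsymm
  -- Then M = (-c) • L.
  have hMc : M = (-c) • L := by
    refine ContinuousLinearMap.ext fun v => ?_
    simp only [ContinuousLinearMap.smul_apply, smul_eq_mul, hMapp, hLapp, hc₁, hc₂]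
    ring
  -- g = ξ - c satisfies fderiv g p = g p • L.
  have hG : ∀ p : ℂ × ℂ, HasFDerivAt (fun q => ξ q - c) ((ξ p - c) • L) p := by
    intro p
    have := (hF p).sub_const c
    refine this.congr_fderiv (Eq.symm ?_)
    rw [hMc]
    module
  -- The auxiliary function F p = (ξ p - c) * exp (-(L p)) has zero derivative.
  set F : ℂ × ℂ → ℂ := fun p => (ξ p - c) * Complex.exp (-(L p)) with hFdef
  have hE : ∀ p : ℂ × ℂ, HasFDerivAt (fun q => Complex.exp (-(L q)))
      (Complex.exp (-(L p)) • (-L)) p := by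
    intro p
    have h1 : HasFDerivAt (fun q : ℂ × ℂ => -(L q)) (-L) p := (L.hasFDerivAt).neg
    exact h1.cexp
  have hF0 : ∀ p : ℂ × ℂ, HasFDerivAt F (0 : (ℂ × ℂ) →L[ℂ] ℂ) p := by
    intro p
    have h := (hG p).mul (hE p)
    refine h.congr_fderiv (Eq.symm ?_)
    refine (ContinuousLinearMap.ext fun v => ?_).symm
    simp only [ContinuousLinearMap.add_apply, ContinuousLinearMap.smul_apply,
      ContinuousLinearMap.neg_apply, smul_eq_mul, ContinuousLinearMap.zero_apply]
    ring
  have hFdiff : Differentiable ℂ F := fun p => (hF0 p).differentiableAt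
  have hFconst : ∀ p : ℂ × ℂ, F p = F 0 := by
    intro p
    exact is_const_of_fderiv_eq_zero hFdiff (fun x => (hF0 x).fderiv) p 0
  refine ⟨F 0, c, fun p => ?_⟩
  have h0 : (ξ p - c) * (Complex.exp (L p))⁻¹ = F 0 := by
    rw [← Complex.exp_neg]; exact hFconst p
  have hne : Complex.exp (L p) ≠ 0 := Complex.exp_ne_zero _
  have h' : ξ p - c = F 0 * Complex.exp (L p) := by
    field_simp at h0
    linear_combination h0
  rw [hLapp] at h'
  linear_combination h'
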